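/- Let ℓ ≥ 1 and α_1,…,α_ℓ, β_1,…,β_ℓ be positive integers. Then evaluating the iterated operator expression at t = 1 gives the duality: R^{α_1}[y^{β_1}·…·R^{α_ℓ}[y^{β_ℓ}]…](1) = R^{β_ℓ}[y^{α_ℓ}·…·R^{β_1}[y^{α_1}]…](1), both sides converging as formal power series in q. -/

import Mathlib

open PowerSeries

noncomputable section

/-- `Q[[q]]`. -/
abbrev Qq : Type := PowerSeries ℚ

/-- `Q[[t,q]]`, viewed as power series in `t` with coefficients in `Q[[q]]`. -/
abbrev QQtq : Type := PowerSeries Qq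

/-- The geometric series `Σ_{k≥0} q^{k n}` (set to `0` at `n = 0`, where the sum diverges;
this value is never used on `t·Q[[t,q]]`). -/
def geomP (n : ℕ) : Qq :=
  if n = 0 then 0 else PowerSeries.mk fun m => if n ∣ m then (1 : ℚ) else 0

/-- The geometric series `Σ_{k≥1} q^{k n}` (set to `0` at `n = 0`). -/
def geomR (n : ℕ) : Qq :=
  if n = 0 then 0 else PowerSeries.mk fun m => if n ∣ m ∧ m ≠ 0 then (1 : ℚ) else 0

/-- `P[f](t) = Σ_{k≥0} f(q^k t)`: on the `t^n`-coefficient this multiplies by `Σ_{k≥0} q^{kn}`. -/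
def Pop (f : QQtq) : QQtq :=
  PowerSeries.mk fun n => geomP n * PowerSeries.coeff (R := Qq) n f

/-- `R[f](t) = Σ_{k≥1} f(q^k t)`: on the `t^n`-coefficient this multiplies by `Σ_{k≥1} q^{kn}`. -/
def Rop (f : QQtq) : QQtq :=
  PowerSeries.mk fun n => geomR n * PowerSeries.coeff (R := Qq) n f

/-- The q-expanding operator `E[f](t) = f(qt)`. -/
def Eop (f : QQtq) : QQtq :=
  PowerSeries.mk fun n => (PowerSeries.X : Qq) ^ n * PowerSeries.coeff (R := Qq) n f

/-- The q-difference operator `D = id - E`, i.e. `D[f](t) = f(t) - f(qt)`. -/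
def Dop (f : QQtq) : QQtq := f - Eop f

/-- `y(t) = t/(1-t) = Σ_{ℓ≥1} t^ℓ`. -/
def yser : QQtq := PowerSeries.mk fun n => if n = 0 then (0 : Qq) else 1

/-- The iterated operator expression `R^{α_1}[y^{β_1}·R^{α_2}[y^{β_2}·…·R^{α_ℓ}[y^{β_ℓ}]…]]`. -/
def iterRY : List (ℕ × ℕ) → QQtq
  | [] => 1
  | p :: rest => Rop^[p.1] (yser ^ p.2 * iterRY rest)

/-- Evaluation at `t = 1`: the formal sum `Σ_n c_n ∈ Q[[q]]` of the `t`-coefficients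
(the `q^m`-coefficient only receives contributions from `n ≤ m`). -/
def ev1 (f : QQtq) : Qq :=
  PowerSeries.mk fun m =>
    ∑ n ∈ Finset.range (m + 1), PowerSeries.coeff (R := ℚ) m (PowerSeries.coeff (R := Qq) n f)

open Finset

def w (x c : ℕ) : ℚ := if x = 0 then 0 else ((x - 1).choose (c - 1) : ℚ)

lemma w_zero (c : ℕ) : w 0 c = 0 := by simp [w]

lemma w_ne_zero {x c : ℕ} (h : w x c ≠ 0) : x ≠ 0 := by
  rintro rfl; exact h (w_zero c)

lemma w_one (x : ℕ) : w x 1 = if x = 0 then 0 else 1 := by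
  simp [w]

lemma hock (a : ℕ) : ∀ K : ℕ, ∑ v ∈ range K, w v (a + 1) = w K (a + 2) := by
  intro K
  induction K with
  | zero => simp [w]
  | succ K ih =>
    rw [Finset.sum_range_succ, ih]
    rcases K with _ | K
    · simp [w, Nat.choose_eq_zero_of_lt]
    · simp only [w, Nat.succ_ne_zero, if_false, Nat.add_sub_cancel, Nat.succ_sub_one]
      rw [← Nat.cast_add, add_comm, ← Nat.choose_succ_succ]

lemma key (a K : ℕ) :
    (∑ p ∈ Finset.HasAntidiagonal.antidiagonal K, if p.1 = 0 then (0:ℚ) else w p.2 (a + 1)) = w K (a + 2) := by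
  rw [Finset.Nat.sum_antidiagonal_eq_sum_range_succ_mk, Finset.sum_range_succ']
  simp only [Nat.succ_ne_zero, if_false, if_pos rfl, add_zero]
  have h1 : ∀ i ∈ range K, w (K - (i + 1)) (a + 1) = w (K - 1 - i) (a + 1) := by
    intro i hi; congr 1; omega
  rw [Finset.sum_congr rfl h1, Finset.sum_range_reflect (fun v => w v (a + 1)) K, hock]
  simp

lemma coeff_geomR (n : ℕ) (hn : n ≠ 0) (u : ℕ) :
    PowerSeries.coeff (R := ℚ) u (geomR n) = if n ∣ u ∧ u ≠ 0 then 1 else 0 := by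
  simp [geomR, hn]

lemma coeff_geomR_pow (n : ℕ) (hn : n ≠ 0) (a : ℕ) (u : ℕ) :
    PowerSeries.coeff (R := ℚ) u (geomR n ^ (a + 1)) = if n ∣ u then w (u / n) (a + 1) else 0 := by
  induction a generalizing u with
  | zero =>
    rw [pow_one, coeff_geomR n hn]
    rcases Nat.eq_zero_or_pos u with rfl | hu
    · simp [w]
    by_cases hd : n ∣ u
    · have : u / n ≠ 0 := by
        intro h; rcases hd with ⟨c, rfl⟩
        rw [Nat.mul_div_cancel_left c (Nat.pos_of_ne_zero hn)] at h
        simp [h] at hu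
      simp [hd, hu.ne', w, this]
    · simp [hd]
  | succ a ih =>
    rw [pow_succ', PowerSeries.coeff_mul]
    by_cases hd : n ∣ u
    · obtain ⟨K, rfl⟩ := hd
      have hK : (n * K) / n = K := Nat.mul_div_cancel_left K (Nat.pos_of_ne_zero hn)
      rw [if_pos (Dvd.intro K rfl), hK]
      have hsub : (Finset.HasAntidiagonal.antidiagonal K).image (fun q : ℕ × ℕ => (n * q.1, n * q.2))
          ⊆ Finset.HasAntidiagonal.antidiagonal (n * K) := by
        intro p hp
        rw [Finset.mem_image] at hp
        obtain ⟨q, hq, rfl⟩ := hp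
        rw [Finset.HasAntidiagonal.mem_antidiagonal] at hq ⊢
        rw [← Nat.mul_add, hq]
      have hzero : ∀ p ∈ Finset.HasAntidiagonal.antidiagonal (n * K),
          p ∉ (Finset.HasAntidiagonal.antidiagonal K).image (fun q : ℕ × ℕ => (n * q.1, n * q.2)) →
          (PowerSeries.coeff (R := ℚ) p.1 (geomR n)) * (PowerSeries.coeff (R := ℚ) p.2 (geomR n ^ (a+1))) = 0 := by
        intro p hp hnot
        rw [coeff_geomR n hn, ih]
        by_contra h
        have h1 : n ∣ p.1 ∧ p.1 ≠ 0 := by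
          by_contra hc; simp [hc] at h
        have h2 : n ∣ p.2 := by
          by_contra hc; simp [hc] at h
        obtain ⟨c, hc⟩ := h1.1
        obtain ⟨d, hdd⟩ := h2
        apply hnot
        rw [Finset.HasAntidiagonal.mem_antidiagonal, hc, hdd, ← Nat.mul_add] at hp
        have hcd : c + d = K := Nat.eq_of_mul_eq_mul_left (Nat.pos_of_ne_zero hn) hp
        rw [Finset.mem_image]
        exact ⟨(c, d), Finset.HasAntidiagonal.mem_antidiagonal.2 hcd, by rw [← hc, ← hdd]⟩
      rw [← Finset.sum_subset hsub hzero]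
      rw [Finset.sum_image (fun q hq q' hq' hqq => by
        have h1 : n * q.1 = n * q'.1 := congrArg Prod.fst hqq
        have h2 : n * q.2 = n * q'.2 := congrArg Prod.snd hqq
        have := Nat.eq_of_mul_eq_mul_left (Nat.pos_of_ne_zero hn) h1
        have := Nat.eq_of_mul_eq_mul_left (Nat.pos_of_ne_zero hn) h2
        exact Prod.ext ‹q.1 = q'.1› ‹q.2 = q'.2›)]
      rw [← key a K]
      apply Finset.sum_congr rfl
      intro q hq
      rw [coeff_geomR n hn, ih]
      by_cases h0 : q.1 = 0
      · simp [h0]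
      · rw [if_pos ⟨Dvd.intro q.1 rfl, by simp [hn, h0]⟩, if_pos (Dvd.intro q.2 rfl),
          Nat.mul_div_cancel_left q.2 (Nat.pos_of_ne_zero hn), if_neg h0, one_mul]
    · rw [if_neg hd]
      apply Finset.sum_eq_zero
      intro p hp
      rw [coeff_geomR n hn, ih]
      by_contra h
      have h1 : n ∣ p.1 := by
        by_contra hc; simp [hc] at h
      have h2 : n ∣ p.2 := by
        by_contra hc; simp [hc] at h
      rw [Finset.HasAntidiagonal.mem_antidiagonal] at hp
      exact hd (hp ▸ Nat.dvd_add h1 h2)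

lemma coeff_yser_pow (b j : ℕ) :
    PowerSeries.coeff (R := Qq) j (yser ^ (b + 1)) = PowerSeries.C (R := ℚ) (w j (b + 1)) := by
  induction b generalizing j with
  | zero =>
    rw [pow_one]
    simp only [yser, coeff_mk]
    split_ifs with h <;> simp [w_one, h]
  | succ b ih =>
    rw [pow_succ', PowerSeries.coeff_mul]
    have : ∀ p ∈ Finset.HasAntidiagonal.antidiagonal j,
        (PowerSeries.coeff (R := Qq) p.1 yser) * (PowerSeries.coeff (R := Qq) p.2 (yser ^ (b+1)))
        = PowerSeries.C (R := ℚ) (if p.1 = 0 then 0 else w p.2 (b + 1)) := by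
      intro p hp
      rw [ih]
      simp only [yser, coeff_mk]
      split_ifs <;> simp
    rw [Finset.sum_congr rfl this, ← map_sum, key b j]

lemma coeff_Rop_iter (a : ℕ) (f : QQtq) (n : ℕ) :
    PowerSeries.coeff (R := Qq) n (Rop^[a] f) = geomR n ^ a * PowerSeries.coeff (R := Qq) n f := by
  induction a generalizing f with
  | zero => simp
  | succ a ih =>
    rw [Function.iterate_succ_apply', Rop, coeff_mk, ih, pow_succ']
    ring

def Phi : List (ℕ × ℕ) → ℕ → ℕ → ℚ
  | [], n, m => if n = 0 ∧ m = 0 then 1 else 0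
  | p :: L, n, m =>
      ∑ j ∈ Finset.range (n + 1), ∑ k ∈ Finset.range (m + 1),
        if k * n ≤ m then w j p.2 * w k p.1 * Phi L (n - j) (m - k * n) else 0

lemma sum_div (n : ℕ) (hn : n ≠ 0) (m : ℕ) (h : ℕ → ℚ) :
    ∑ u ∈ Finset.range (m + 1), (if n ∣ u then h (u / n) else 0)
      = ∑ k ∈ Finset.range (m + 1), (if k * n ≤ m then h k else 0) := by
  rw [← Finset.sum_filter, ← Finset.sum_filter]
  refine Finset.sum_nbij' (fun u => u / n) (fun k => k * n) ?_ ?_ ?_ ?_ ?_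
  · intro u hu
    simp only [Finset.mem_filter, Finset.mem_range] at hu ⊢
    refine ⟨lt_of_le_of_lt (Nat.div_le_self u n) hu.1, ?_⟩
    rw [Nat.div_mul_cancel hu.2]
    omega
  · intro k hk
    simp only [Finset.mem_filter, Finset.mem_range] at hk ⊢
    exact ⟨by omega, dvd_mul_left n k⟩
  · intro u hu
    simp only [Finset.mem_filter, Finset.mem_range] at hu
    exact Nat.div_mul_cancel hu.2
  · intro k hk
    exact Nat.mul_div_cancel k (Nat.pos_of_ne_zero hn)
  · intro u hu; rfl

theorem coeff_iterRY (L : List (ℕ × ℕ)) (hL : ∀ p ∈ L, 0 < p.1 ∧ 0 < p.2) (n m : ℕ) :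
    PowerSeries.coeff (R := ℚ) m (PowerSeries.coeff (R := Qq) n (iterRY L)) = Phi L n m := by
  induction L generalizing n m with
  | nil =>
    simp only [iterRY, Phi, PowerSeries.coeff_one]
    by_cases h : n = 0 <;> simp [h, PowerSeries.coeff_one, and_comm]
  | cons p L ih =>
    obtain ⟨pa, pb⟩ := p
    obtain ⟨ha, hb⟩ := hL (pa, pb) List.mem_cons_self
    simp only at ha hb
    obtain ⟨a, rfl⟩ : ∃ a, pa = a + 1 := ⟨pa - 1, by omega⟩
    obtain ⟨b, rfl⟩ : ∃ b, pb = b + 1 := ⟨pb - 1, by omega⟩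
    have hL' : ∀ q ∈ L, 0 < q.1 ∧ 0 < q.2 := fun q hq => hL q (List.mem_cons_of_mem _ hq)
    rw [iterRY, coeff_Rop_iter]
    rcases Nat.eq_zero_or_pos n with rfl | hn
    · rw [geomR, if_pos rfl, zero_pow (by omega), zero_mul, map_zero]
      simp [Phi, w_zero]
    · -- n ≥ 1
      have hn' : n ≠ 0 := hn.ne'
      have hc : ∀ v, PowerSeries.coeff (R := ℚ) v (PowerSeries.coeff (R := Qq) n (yser ^ (b+1) * iterRY L))
          = ∑ j ∈ Finset.range (n + 1), w j (b+1) * Phi L (n - j) v := by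
        intro v
        rw [PowerSeries.coeff_mul, Finset.Nat.sum_antidiagonal_eq_sum_range_succ_mk, map_sum]
        refine Finset.sum_congr rfl fun j hj => ?_
        rw [coeff_yser_pow, PowerSeries.coeff_C_mul, ih hL']
      set h : ℕ → ℚ := fun k => w k (a+1) * ∑ j ∈ Finset.range (n + 1),
          w j (b+1) * Phi L (n - j) (m - k * n) with hh
      rw [PowerSeries.coeff_mul, Finset.Nat.sum_antidiagonal_eq_sum_range_succ_mk]
      have step1 : ∀ u ∈ Finset.range (m + 1),
          PowerSeries.coeff (R := ℚ) u (geomR n ^ (a + 1))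
            * PowerSeries.coeff (R := ℚ) (m - u) (PowerSeries.coeff (R := Qq) n (yser ^ (b+1) * iterRY L))
          = if n ∣ u then h (u / n) else 0 := by
        intro u hu
        rw [coeff_geomR_pow n hn' a u, hc, ite_mul, zero_mul]
        by_cases hd : n ∣ u
        · rw [if_pos hd, if_pos hd, hh]
          simp only
          rw [Nat.div_mul_cancel hd]
        · rw [if_neg hd, if_neg hd]
      rw [Finset.sum_congr rfl step1, sum_div n hn' m h]
      show _ = Phi ((a+1, b+1) :: L) n m
      rw [Phi, Finset.sum_comm]
      refine Finset.sum_congr rfl fun k hk => ?_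
      by_cases hcn : k * n ≤ m
      · simp only [if_pos hcn, hh, Finset.mul_sum]
        exact Finset.sum_congr rfl fun j hj => by ring
      · simp only [if_neg hcn, Finset.sum_const_zero]

def nth (L : List (ℕ × ℕ)) (i : ℕ) : ℕ × ℕ := L.getD i (0, 0)

def Jsum {ℓ : ℕ} (jk : Fin ℓ → ℕ × ℕ) : ℕ := ∑ r, (jk r).1

def Esum {ℓ : ℕ} (jk : Fin ℓ → ℕ × ℕ) : ℕ :=
  ∑ r, (jk r).2 * ∑ s, if r ≤ s then (jk s).1 else 0

def Box (ℓ N M : ℕ) : Finset (Fin ℓ → ℕ × ℕ) :=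
  Fintype.piFinset fun _ => Finset.range (N + 1) ×ˢ Finset.range (M + 1)

def Wprod (L : List (ℕ × ℕ)) (jk : Fin L.length → ℕ × ℕ) : ℚ :=
  ∏ r, w ((jk r).1) ((nth L r).2) * w ((jk r).2) ((nth L r).1)

lemma Jsum_cons {ℓ : ℕ} (q : ℕ × ℕ) (jk : Fin ℓ → ℕ × ℕ) :
    Jsum (Fin.cons q jk) = q.1 + Jsum jk := by
  simp [Jsum, Fin.sum_univ_succ]

lemma Esum_cons {ℓ : ℕ} (q : ℕ × ℕ) (jk : Fin ℓ → ℕ × ℕ) :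
    Esum (Fin.cons q jk) = q.2 * (q.1 + Jsum jk) + Esum jk := by
  rw [Esum, Fin.sum_univ_succ]
  congr 1
  · simp [Fin.cons_zero, Fin.zero_le, Jsum, Fin.sum_univ_succ]
  · rw [Esum]
    refine Finset.sum_congr rfl fun r _ => ?_
    rw [Fin.cons_succ]
    congr 1
    rw [Fin.sum_univ_succ]
    simp [Fin.succ_le_succ_iff, Fin.le_zero_iff, Fin.succ_ne_zero]

lemma Wprod_cons (p : ℕ × ℕ) (L : List (ℕ × ℕ)) (q : ℕ × ℕ) (jk : Fin L.length → ℕ × ℕ) :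
    Wprod (p :: L) (Fin.cons q jk) = (w q.1 p.2 * w q.2 p.1) * Wprod L jk := by
  rw [Wprod]
  show (∏ r : Fin (L.length + 1),
      w (((Fin.cons q jk : Fin (L.length + 1) → ℕ × ℕ) r).1) ((nth (p :: L) (r : ℕ)).2)
        * w (((Fin.cons q jk : Fin (L.length + 1) → ℕ × ℕ) r).2) ((nth (p :: L) (r : ℕ)).1))
    = w q.1 p.2 * w q.2 p.1 * Wprod L jk
  rw [Fin.prod_univ_succ, Wprod]
  simp only [Fin.cons_zero, Fin.cons_succ, Fin.val_zero, Fin.val_succ, nth, List.getD_cons_zero,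
    List.getD_cons_succ]

lemma sum_box_succ {ℓ N M : ℕ} (F : (Fin (ℓ + 1) → ℕ × ℕ) → ℚ) :
    ∑ jk ∈ Box (ℓ + 1) N M, F jk
      = ∑ q ∈ (Finset.range (N + 1) ×ˢ Finset.range (M + 1)) ×ˢ Box ℓ N M,
          F (Fin.cons q.1 q.2) := by
  refine Finset.sum_nbij' (fun jk => (jk 0, Fin.tail jk)) (fun q => Fin.cons q.1 q.2)
    ?_ ?_ ?_ ?_ ?_
  · intro jk hjk
    rw [Box, Fintype.mem_piFinset] at hjk
    rw [Finset.mem_product]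
    exact ⟨hjk 0, by rw [Box, Fintype.mem_piFinset]; intro r; exact hjk r.succ⟩
  · intro q hq
    rw [Finset.mem_product] at hq
    rw [Box, Fintype.mem_piFinset]
    intro r
    rcases r with ⟨_ | r, hr⟩
    · exact hq.1
    · have := Fintype.mem_piFinset.1 hq.2 ⟨r, by omega⟩
      exact this
  · intro jk _; exact Fin.cons_self_tail jk
  · intro q _
    simp
  · intro jk _; rw [Fin.cons_self_tail]

lemma single_le_Jsum {ℓ : ℕ} (jk : Fin ℓ → ℕ × ℕ) (r : Fin ℓ) : (jk r).1 ≤ Jsum jk :=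
  Finset.single_le_sum (f := fun r => (jk r).1) (fun _ _ => Nat.zero_le _) (Finset.mem_univ r)

lemma single_le_Esum {ℓ : ℕ} (jk : Fin ℓ → ℕ × ℕ) (r : Fin ℓ) (h : (jk r).1 ≠ 0) :
    (jk r).2 ≤ Esum jk := by
  have hT : (jk r).1 ≤ ∑ s, if r ≤ s then (jk s).1 else 0 := by
    have := Finset.single_le_sum (f := fun s => if r ≤ s then (jk s).1 else 0)
      (fun _ _ => Nat.zero_le _) (Finset.mem_univ r)
    simpa using this
  calc (jk r).2 ≤ (jk r).2 * ∑ s, if r ≤ s then (jk s).1 else 0 :=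
        Nat.le_mul_of_pos_right _ (by omega)
    _ ≤ Esum jk := Finset.single_le_sum (f := fun r => (jk r).2 * ∑ s, if r ≤ s then (jk s).1 else 0)
        (fun _ _ => Nat.zero_le _) (Finset.mem_univ r)

lemma Wprod_ne_zero {L : List (ℕ × ℕ)} {jk : Fin L.length → ℕ × ℕ} (h : Wprod L jk ≠ 0) :
    ∀ r, (jk r).1 ≠ 0 ∧ (jk r).2 ≠ 0 := by
  intro r
  rw [Wprod, Finset.prod_ne_zero_iff] at h
  have := h r (Finset.mem_univ r)
  rw [mul_ne_zero_iff] at this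
  exact ⟨w_ne_zero this.1, w_ne_zero this.2⟩

lemma sum_box_shrink (L : List (ℕ × ℕ)) {n' m' n m : ℕ} (h1 : n' ≤ n) (h2 : m' ≤ m) :
    ∑ jk ∈ Box L.length n m, (if Jsum jk = n' ∧ Esum jk = m' then Wprod L jk else 0)
      = ∑ jk ∈ Box L.length n' m', (if Jsum jk = n' ∧ Esum jk = m' then Wprod L jk else 0) := by
  refine (Finset.sum_subset (Fintype.piFinset_subset _ _ fun r =>
    Finset.product_subset_product (Finset.range_subset_range.2 (by omega))
      (Finset.range_subset_range.2 (by omega))) ?_).symm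
  intro jk hjk hnot
  split_ifs with hcond
  · by_contra hW
    apply hnot
    have hall := Wprod_ne_zero hW
    refine Fintype.mem_piFinset.2 fun r => ?_
    rw [Finset.mem_product, Finset.mem_range, Finset.mem_range]
    constructor
    · have := single_le_Jsum jk r; omega
    · have := single_le_Esum jk r (hall r).1; omega
  · rfl

theorem phi_eq (L : List (ℕ × ℕ)) : ∀ n m : ℕ, Phi L n m
    = ∑ jk ∈ Box L.length n m, (if Jsum jk = n ∧ Esum jk = m then Wprod L jk else 0) := by
  induction L with
  | nil =>
    intro n m
    rw [Phi]
    rw [show Box (List.length []) n m = {(fun r => Fin.elim0 r : Fin 0 → ℕ × ℕ)} from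
      Finset.eq_singleton_iff_unique_mem.2 ⟨by rw [Box, Fintype.mem_piFinset]; intro r; exact Fin.elim0 r,
        fun x _ => funext fun r => Fin.elim0 r⟩]
    rw [Finset.sum_singleton]
    have hJ : Jsum (fun r : Fin 0 => Fin.elim0 r) = 0 := by simp [Jsum]
    have hE : Esum (fun r : Fin 0 => Fin.elim0 r) = 0 := by simp [Esum]
    have hW : Wprod [] (fun r : Fin 0 => Fin.elim0 r) = 1 := by simp [Wprod]
    rw [hJ, hE, hW]
    by_cases hn : n = 0 <;> by_cases hm : m = 0 <;> simp [hn, hm, eq_comm (a := (0:ℕ))]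
  | cons p L ih =>
    intro n m
    show Phi (p :: L) n m = ∑ jk ∈ Box (L.length + 1) n m,
      (if Jsum jk = n ∧ Esum jk = m
        then Wprod (p :: L) (jk : Fin (p :: L).length → ℕ × ℕ) else 0)
    rw [sum_box_succ, Finset.sum_product, Finset.sum_product, Phi]
    refine Finset.sum_congr rfl fun j0 hj0 => Finset.sum_congr rfl fun k0 hk0 => ?_
    rw [Finset.mem_range] at hj0 hk0
    by_cases hcn : k0 * n ≤ m
    · rw [if_pos hcn, ih (n - j0) (m - k0 * n),
        ← sum_box_shrink L (show n - j0 ≤ n by omega) (show m - k0 * n ≤ m by omega),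
        Finset.mul_sum]
      refine Finset.sum_congr rfl fun jk hjk => ?_
      rw [Jsum_cons, Esum_cons, Wprod_cons, mul_ite, mul_zero]
      refine if_congr ?_ rfl rfl
      simp only
      constructor
      · rintro ⟨h1, h2⟩
        have h3 : j0 + Jsum jk = n := by omega
        rw [h3]
        omega
      · rintro ⟨h1, h2⟩
        rw [h1] at h2
        omega
    · rw [if_neg hcn]
      symm
      apply Finset.sum_eq_zero
      intro jk _
      rw [Jsum_cons, Esum_cons]
      simp only
      rw [if_neg]
      rintro ⟨h1, h2⟩
      rw [h1] at h2
      omega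

lemma Jsum_le_Esum {ℓ : ℕ} (jk : Fin ℓ → ℕ × ℕ) (h : ∀ r, (jk r).1 ≠ 0 ∧ (jk r).2 ≠ 0) :
    Jsum jk ≤ Esum jk := by
  rw [Jsum, Esum]
  refine Finset.sum_le_sum fun r _ => ?_
  have hT : (jk r).1 ≤ ∑ s, if r ≤ s then (jk s).1 else 0 := by
    have := Finset.single_le_sum (f := fun s => if r ≤ s then (jk s).1 else 0)
      (fun _ _ => Nat.zero_le _) (Finset.mem_univ r)
    simpa using this
  calc (jk r).1 ≤ 1 * ∑ s, if r ≤ s then (jk s).1 else 0 := by omega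
    _ ≤ (jk r).2 * ∑ s, if r ≤ s then (jk s).1 else 0 :=
      Nat.mul_le_mul_right _ (by have := (h r).2; omega)

theorem coeff_ev1 (L : List (ℕ × ℕ)) (hL : ∀ p ∈ L, 0 < p.1 ∧ 0 < p.2) (m : ℕ) :
    PowerSeries.coeff (R := ℚ) m (ev1 (iterRY L))
      = ∑ jk ∈ Box L.length m m, (if Esum jk = m then Wprod L jk else 0) := by
  rw [ev1, coeff_mk]
  have step : ∀ n ∈ Finset.range (m + 1),
      PowerSeries.coeff (R := ℚ) m (PowerSeries.coeff (R := Qq) n (iterRY L))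
        = ∑ jk ∈ Box L.length m m, (if Jsum jk = n ∧ Esum jk = m then Wprod L jk else 0) := by
    intro n hn
    rw [Finset.mem_range] at hn
    rw [coeff_iterRY L hL, phi_eq,
      ← sum_box_shrink L (show n ≤ m by omega) (le_refl m)]
  rw [Finset.sum_congr rfl step, Finset.sum_comm]
  refine Finset.sum_congr rfl fun jk _ => ?_
  have hsplit : ∀ n : ℕ, (if Jsum jk = n ∧ Esum jk = m then Wprod L jk else 0)
      = if n = Jsum jk then (if Esum jk = m then Wprod L jk else 0) else 0 := by
    intro n
    by_cases h1 : n = Jsum jk <;> by_cases h2 : Esum jk = m <;> simp [h1, h2]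
    · intro h; omega
  rw [Finset.sum_congr rfl fun n _ => hsplit n, Finset.sum_ite_eq']
  by_cases hJ : Jsum jk ∈ Finset.range (m + 1)
  · rw [if_pos hJ]
  · rw [if_neg hJ]
    rw [Finset.mem_range] at hJ
    by_cases hE : Esum jk = m
    · rw [if_pos hE]
      by_contra hW
      have hne : Wprod L jk ≠ 0 := fun h => hW h.symm
      have := Jsum_le_Esum jk (Wprod_ne_zero hne)
      omega
    · rw [if_neg hE]

lemma Esum_dual {ℓ : ℕ} (jk : Fin ℓ → ℕ × ℕ) :
    Esum (fun r => ((jk r.rev).2, (jk r.rev).1)) = Esum jk := by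
  have expand : ∀ F G : Fin ℓ → ℕ,
      (∑ r, F r * ∑ s, if r ≤ s then G s else 0) = ∑ r, ∑ s, if r ≤ s then F r * G s else 0 := by
    intro F G
    refine Finset.sum_congr rfl fun r _ => ?_
    rw [Finset.mul_sum]
    exact Finset.sum_congr rfl fun s _ => by rw [mul_ite, mul_zero]
  rw [Esum, Esum]
  simp only
  rw [expand (fun r => (jk r.rev).1) (fun s => (jk s.rev).2),
      expand (fun r => (jk r).2) (fun s => (jk s).1), Finset.sum_comm]
  refine Fintype.sum_equiv Fin.revPerm _ _ fun s => ?_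
  refine Fintype.sum_equiv Fin.revPerm _ _ fun r => ?_
  simp only [Fin.revPerm_apply, Fin.rev_rev, Fin.rev_le_rev]
  split_ifs <;> ring

lemma box_reindex {ℓ₁ ℓ₂ : ℕ} (h : ℓ₁ = ℓ₂) (G : (Fin ℓ₁ → ℕ × ℕ) → ℚ) (N M : ℕ) :
    ∑ jk ∈ Box ℓ₁ N M, G jk = ∑ jk ∈ Box ℓ₂ N M, G (fun r => jk (Fin.cast h r)) := by
  subst h; rfl

lemma Esum_cast {ℓ₁ ℓ₂ : ℕ} (h : ℓ₁ = ℓ₂) (jk : Fin ℓ₂ → ℕ × ℕ) :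
    Esum (fun r : Fin ℓ₁ => jk (Fin.cast h r)) = Esum jk := by
  subst h; rfl

lemma nth_ofFn {ℓ : ℕ} (f : Fin ℓ → ℕ × ℕ) (i : ℕ) (hi : i < ℓ) :
    nth (List.ofFn f) i = f ⟨i, hi⟩ := by
  rw [nth, List.getD_eq_getElem _ _ (by simpa using hi)]
  simp

lemma sym_swap (ℓ m : ℕ) (A B : Fin ℓ → ℕ) :
    ∑ jk ∈ Box ℓ m m, (if Esum jk = m then ∏ r, w ((jk r).1) (B r) * w ((jk r).2) (A r) else 0)
      = ∑ jk ∈ Box ℓ m m,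
          (if Esum jk = m then ∏ r, w ((jk r).1) (A r.rev) * w ((jk r).2) (B r.rev) else 0) := by
  have hmem : ∀ jk ∈ Box ℓ m m,
      (fun r : Fin ℓ => ((jk r.rev).2, (jk r.rev).1)) ∈ Box ℓ m m := by
    intro jk hjk
    refine Fintype.mem_piFinset.2 fun r => ?_
    have := Fintype.mem_piFinset.1 hjk r.rev
    rw [Finset.mem_product] at this ⊢
    exact ⟨this.2, this.1⟩
  have hinv : ∀ jk : Fin ℓ → ℕ × ℕ,
      (fun r : Fin ℓ => (((fun r' : Fin ℓ => ((jk r'.rev).2, (jk r'.rev).1)) r.rev).2,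
        ((fun r' : Fin ℓ => ((jk r'.rev).2, (jk r'.rev).1)) r.rev).1)) = jk := by
    intro jk; funext r; simp [Fin.rev_rev]
  refine Finset.sum_nbij' (fun jk => fun r => ((jk r.rev).2, (jk r.rev).1))
    (fun jk => fun r => ((jk r.rev).2, (jk r.rev).1)) hmem hmem
    (fun jk _ => hinv jk) (fun jk _ => hinv jk) ?_
  intro jk hjk
  rw [Esum_dual]
  refine if_congr Iff.rfl ?_ rfl
  refine Fintype.prod_equiv Fin.revPerm _ _ fun r => ?_
  simp only [Fin.revPerm_apply, Fin.rev_rev]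
  ring


/-- the duality
`R^{α_1}[y^{β_1}·…·R^{α_ℓ}[y^{β_ℓ}]…](1) = R^{β_ℓ}[y^{α_ℓ}·…·R^{β_1}[y^{α_1}]…](1)`. -/
theorem iterRY_duality (ℓ : ℕ) (hℓ : 0 < ℓ) (α β : Fin ℓ → ℕ)
    (hα : ∀ r, 0 < α r) (hβ : ∀ r, 0 < β r) :
    ev1 (iterRY (List.ofFn fun r => (α r, β r)))
      = ev1 (iterRY (List.ofFn fun r => (β r.rev, α r.rev))) := by
  ext m
  set L1 : List (ℕ × ℕ) := List.ofFn fun r => (α r, β r) with hL1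
  set L2 : List (ℕ × ℕ) := List.ofFn fun r => (β r.rev, α r.rev) with hL2
  have h1 : ∀ p ∈ L1, 0 < p.1 ∧ 0 < p.2 := by
    intro p hp
    rw [hL1, List.mem_ofFn] at hp
    obtain ⟨r, rfl⟩ := hp
    exact ⟨hα r, hβ r⟩
  have h2 : ∀ p ∈ L2, 0 < p.1 ∧ 0 < p.2 := by
    intro p hp
    rw [hL2, List.mem_ofFn] at hp
    obtain ⟨r, rfl⟩ := hp
    exact ⟨hβ r.rev, hα r.rev⟩
  have hl1 : L1.length = ℓ := List.length_ofFn
  have hl2 : L2.length = ℓ := List.length_ofFn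
  rw [coeff_ev1 L1 h1 m, coeff_ev1 L2 h2 m, box_reindex hl1, box_reindex hl2]
  have e1 : ∀ jk ∈ Box ℓ m m,
      (if Esum (fun r => jk (Fin.cast hl1 r)) = m
        then Wprod L1 (fun r => jk (Fin.cast hl1 r)) else 0)
      = (if Esum jk = m then ∏ r, w ((jk r).1) (β r) * w ((jk r).2) (α r) else 0) := by
    intro jk _
    rw [Esum_cast]
    refine if_congr Iff.rfl ?_ rfl
    rw [Wprod]
    refine Fintype.prod_equiv (finCongr hl1) _ _ fun r => ?_
    rw [nth_ofFn _ _ (by omega : (r : ℕ) < ℓ)]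
    rfl
  have e2 : ∀ jk ∈ Box ℓ m m,
      (if Esum (fun r => jk (Fin.cast hl2 r)) = m
        then Wprod L2 (fun r => jk (Fin.cast hl2 r)) else 0)
      = (if Esum jk = m then ∏ r, w ((jk r).1) (α r.rev) * w ((jk r).2) (β r.rev) else 0) := by
    intro jk _
    rw [Esum_cast]
    refine if_congr Iff.rfl ?_ rfl
    rw [Wprod]
    refine Fintype.prod_equiv (finCongr hl2) _ _ fun r => ?_
    rw [nth_ofFn _ _ (by omega : (r : ℕ) < ℓ)]
    rfl
  rw [Finset.sum_congr rfl e1, Finset.sum_congr rfl e2]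
  exact sym_swap ℓ m α β
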